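/- arXiv:2110.06401 — 3 statements merged into one kernel-verified Lean document; each statement's English description precedes it below -/
import Mathlib

section
/- Let V = {1,…,n} and let (E_t)_{t∈ℕ} be a uniformly B-connected sequence of undirected edge sets on V. For a mini-batch originating at node j at time τ, set k₀ = ⌈τ/B⌉. Then for every k ≥ 0 the informed set satisfies |A_{(k₀+k)B}| ≥ min(n, k + 1). -/
/-- The union graph of the time-varying graph `E` over the window
`[k*B, (k+1)*B)`. -/
def windowGraph {n : ℕ} (E : ℕ → SimpleGraph (Fin n)) (B k : ℕ) :
    SimpleGraph (Fin n) :=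
  ⨆ t ∈ Finset.Ico (k * B) ((k + 1) * B), E t

lemma windowGraph_adj {n : ℕ} (E : ℕ → SimpleGraph (Fin n)) (B k : ℕ)
    {a b : Fin n} (h : (windowGraph E B k).Adj a b) :
    ∃ t, k * B ≤ t ∧ t < (k + 1) * B ∧ (E t).Adj a b := by
  simp only [windowGraph, SimpleGraph.iSup_adj, Finset.mem_Ico] at h
  obtain ⟨t, ⟨h1, h2⟩, h3⟩ := h
  exact ⟨t, h1, h2, h3⟩

/-- For a uniformly `B`-connected time-varying graph on
`V = {1,…,n}` and a flooding mini-batch released by node `j` at time `τ`,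
with `k₀ = ⌈τ/B⌉`, the informed set satisfies `|A_{(k₀+k)B}| ≥ min (n, k+1)`
for every `k ≥ 0`. -/
theorem flooding_card_growth (n B : ℕ) (hB : 0 < B)
    (E : ℕ → SimpleGraph (Fin n))
    (hconn : ∀ k : ℕ, (windowGraph E B k).Connected)
    (j : Fin n) (τ : ℕ) (A : ℕ → Set (Fin n))
    (hA0 : A τ = {j})
    (hAstep : ∀ t, τ ≤ t →
      A (t + 1) = A t ∪ {i | ∃ r ∈ A t, (E t).Adj i r}) :
    ∀ k : ℕ, min n (k + 1) ≤ (A ((τ ⌈/⌉ B + k) * B)).ncard := by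
  -- monotonicity
  have mono : ∀ t t', τ ≤ t → t ≤ t' → A t ⊆ A t' := by
    intro t t' ht htt'
    induction t' with
    | zero =>
      have : t = 0 := by omega
      subst this; exact subset_rfl
    | succ s ih =>
      rcases Nat.lt_or_ge t (s+1) with h | h
      · have hts : t ≤ s := by omega
        have hτs : τ ≤ s := le_trans ht hts
        have := hAstep s hτs
        rw [this]
        exact (ih hts).trans Set.subset_union_left
      · have : t = s + 1 := le_antisymm htt' h
        subst this; exact subset_rfl
  have hτ0 : τ ≤ (τ ⌈/⌉ B) * B := by
    have := le_smul_ceilDiv (b := τ) hB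
    simpa [smul_eq_mul, Nat.mul_comm] using this
  have hjmem : ∀ k, τ ≤ k → j ∈ A k := by
    intro k hk
    apply mono τ k le_rfl hk
    simp [hA0]
  -- growth over a connected window
  have grow : ∀ m, τ ≤ m * B → A (m * B) ≠ Set.univ →
      (A (m * B)).ncard + 1 ≤ (A ((m + 1) * B)).ncard := by
    intro m hm hne
    set S : Set (Fin n) := A (m * B) with hS
    obtain ⟨b, hb⟩ : ∃ b, b ∉ S := by
      by_contra h
      push_neg at h
      exact hne (Set.eq_univ_of_forall h)
    have hj : j ∈ S := hjmem _ hm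
    obtain ⟨w⟩ := (hconn m).preconnected j b
    obtain ⟨d, _, hdf, hds⟩ := w.exists_boundary_dart S hj hb
    obtain ⟨t, ht1, ht2, hadj⟩ := windowGraph_adj E B m d.adj
    have hτt : τ ≤ t := le_trans hm ht1
    have hdft : d.fst ∈ A t := mono _ _ hm ht1 hdf
    have hmem : d.snd ∈ A (t + 1) := by
      rw [hAstep t hτt]
      right
      exact ⟨d.fst, hdft, hadj.symm⟩
    have hsub : insert d.snd S ⊆ A ((m + 1) * B) := by
      intro x hx
      rcases hx with rfl | hx
      · exact mono (t+1) _ (by omega) (by omega) hmem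
      · exact mono (m * B) _ hm (by nlinarith) hx
    calc S.ncard + 1 = (insert d.snd S).ncard := by
          rw [Set.ncard_insert_of_notMem hds (Set.toFinite S)]
      _ ≤ (A ((m + 1) * B)).ncard := Set.ncard_le_ncard hsub (Set.toFinite _)
  -- main induction
  intro k
  induction k with
  | zero =>
    have hj : j ∈ A ((τ ⌈/⌉ B + 0) * B) := hjmem _ (by simpa using hτ0)
    have h1 : 1 ≤ (A ((τ ⌈/⌉ B + 0) * B)).ncard := by
      rw [Nat.one_le_iff_ne_zero]
      intro h
      have := (Set.ncard_eq_zero (Set.toFinite _)).mp h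
      rw [this] at hj
      exact hj
    have hn : 1 ≤ n := Fin.pos j
    omega
  | succ k ih =>
    have hτk : τ ≤ (τ ⌈/⌉ B + k) * B := le_trans hτ0 (by nlinarith)
    have hstep : (τ ⌈/⌉ B + k + 1) * B = (τ ⌈/⌉ B + (k + 1)) * B := by ring
    by_cases h : A ((τ ⌈/⌉ B + k) * B) = Set.univ
    · have hsub : (Set.univ : Set (Fin n)) ⊆ A ((τ ⌈/⌉ B + (k + 1)) * B) := by
        rw [← h]
        exact mono _ _ hτk (by nlinarith)
      have : (A ((τ ⌈/⌉ B + (k + 1)) * B)) = Set.univ :=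
        Set.eq_univ_of_univ_subset hsub
      rw [this, Set.ncard_univ, Nat.card_eq_fintype_card, Fintype.card_fin]
      omega
    · have hgrow := grow _ hτk h
      rw [hstep] at hgrow
      have hlt : (A ((τ ⌈/⌉ B + k) * B)).ncard < n := by
        have hss : A ((τ ⌈/⌉ B + k) * B) ⊂ Set.univ :=
          (Set.ssubset_univ_iff).2 h
        have := Set.ncard_lt_ncard hss (Set.toFinite _)
        simpa [Set.ncard_univ, Nat.card_eq_fintype_card] using this
      omega
end

section
/- Let V = {1,…,n} and let (E_t)_{t∈ℕ} be a uniformly B-connected sequence of undirected edge sets on V. Let (W_t)_{t∈ℕ} be n×n real matrices such that each W_t has nonnegative entries, strictly positive diagonal entries, and for i ≠ j satisfies [W_t]_{ij} > 0 if and only if (i,j) ∈ E_t. Then for every τ ∈ ℕ, every entry of the product W_{t*−1} W_{t*−2} ⋯ W_τ is strictly positive, where t* = (⌈τ/B⌉ + (n − 1))B. -/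
/-- The backward matrix product `W (t-1) * W (t-2) * ⋯ * W τ`
(the identity matrix when `t ≤ τ`). -/
def backProd {n : ℕ} (W : ℕ → Matrix (Fin n) (Fin n) ℝ) (τ t : ℕ) :
    Matrix (Fin n) (Fin n) ℝ :=
  ((List.range (t - τ)).map fun s => W (t - 1 - s)).prod

namespace BPaux

variable {n : ℕ} (W : ℕ → Matrix (Fin n) (Fin n) ℝ)

lemma backProd_of_le {τ t : ℕ} (h : t ≤ τ) : backProd W τ t = 1 := by
  simp [backProd, Nat.sub_eq_zero_of_le h]

lemma backProd_succ {τ t : ℕ} (h : τ ≤ t) :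
    backProd W τ (t + 1) = W t * backProd W τ t := by
  have h1 : t + 1 - τ = (t - τ) + 1 := by omega
  unfold backProd
  rw [h1, List.range_succ_eq_map, List.map_cons, List.prod_cons, List.map_map]
  have h2 : t + 1 - 1 - 0 = t := by omega
  rw [h2]
  congr 1
  congr 1
  apply List.map_congr_left
  intro s _
  simp only [Function.comp_apply]
  have h3 : t + 1 - 1 - s.succ = t - 1 - s := by omega
  rw [h3]

lemma backProd_nonneg (hW : ∀ t i j, 0 ≤ W t i j) (τ : ℕ) :
    ∀ t i j, 0 ≤ backProd W τ t i j := by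
  intro t
  induction t with
  | zero =>
    intro i j
    rw [backProd_of_le W (Nat.zero_le τ)]
    by_cases h : i = j <;> simp [Matrix.one_apply, h]
  | succ t ih =>
    intro i j
    by_cases h : t + 1 ≤ τ
    · rw [backProd_of_le W h]
      by_cases h' : i = j <;> simp [Matrix.one_apply, h']
    · rw [backProd_succ W (by omega)]
      rw [Matrix.mul_apply]
      exact Finset.sum_nonneg fun k _ => mul_nonneg (hW t i k) (ih k j)

lemma backProd_mono (hW : ∀ t i j, 0 ≤ W t i j) (hWd : ∀ t i, 0 < W t i i)
    {τ t : ℕ} (hτ : τ ≤ t) {i j : Fin n} (hpos : 0 < backProd W τ t i j) :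
    0 < backProd W τ (t + 1) i j := by
  rw [backProd_succ W hτ, Matrix.mul_apply]
  apply Finset.sum_pos'
  · intro k _
    exact mul_nonneg (hW t i k) (backProd_nonneg W hW τ t k j)
  · exact ⟨i, Finset.mem_univ i, mul_pos (hWd t i) hpos⟩

lemma backProd_prop (hW : ∀ t i j, 0 ≤ W t i j)
    {τ t : ℕ} (hτ : τ ≤ t) {i l j : Fin n} (hWil : 0 < W t i l)
    (hpos : 0 < backProd W τ t l j) :
    0 < backProd W τ (t + 1) i j := by
  rw [backProd_succ W hτ, Matrix.mul_apply]
  apply Finset.sum_pos'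
  · intro k _
    exact mul_nonneg (hW t i k) (backProd_nonneg W hW τ t k j)
  · exact ⟨l, Finset.mem_univ l, mul_pos hWil hpos⟩

lemma backProd_mono' (hW : ∀ t i j, 0 ≤ W t i j) (hWd : ∀ t i, 0 < W t i i)
    {τ t t' : ℕ} (hτ : τ ≤ t) (htt' : t ≤ t') {i j : Fin n}
    (hpos : 0 < backProd W τ t i j) :
    0 < backProd W τ t' i j := by
  induction t', htt' using Nat.le_induction with
  | base => exact hpos
  | succ m hm ih => exact backProd_mono W hW hWd (le_trans hτ hm) ih

lemma backProd_diag_pos (hW : ∀ t i j, 0 ≤ W t i j) (hWd : ∀ t i, 0 < W t i i)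
    {τ t : ℕ} (hτ : τ ≤ t) (i : Fin n) : 0 < backProd W τ t i i := by
  have h0 : 0 < backProd W τ τ i i := by
    rw [backProd_of_le W le_rfl]; simp
  exact backProd_mono' W hW hWd le_rfl hτ h0

lemma exists_crossing {G : SimpleGraph (Fin n)} {S : Finset (Fin n)} :
    ∀ {u v : Fin n}, G.Walk u v → u ∉ S → v ∈ S →
    ∃ a b, a ∈ S ∧ b ∉ S ∧ G.Adj a b := by
  intro u v p
  induction p with
  | nil => intro hu hv; exact absurd hv hu
  | @cons u w v h p ih =>
    intro hu hv
    by_cases hw : w ∈ S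
    · exact ⟨w, u, hw, hu, h.symm⟩
    · exact ih hw hv

lemma windowGraph_adj {E : ℕ → SimpleGraph (Fin n)} {B k : ℕ} {a b : Fin n}
    (h : (windowGraph E B k).Adj a b) :
    ∃ t, k * B ≤ t ∧ t < (k + 1) * B ∧ (E t).Adj a b := by
  simp only [windowGraph, SimpleGraph.iSup_adj] at h
  obtain ⟨t, ht, hadj⟩ := h
  rw [Finset.mem_Ico] at ht
  exact ⟨t, ht.1, ht.2, hadj⟩

end BPaux

/-- For a uniformly `B`-connected time-varying graph on
`V = {1,…,n}` and weight matrices `W t` that are nonnegative, have strictly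
positive diagonal, and whose off-diagonal positivity pattern matches `E t`,
every entry of the backward product `W (t*-1) ⋯ W τ` is strictly positive,
where `t* = (⌈τ/B⌉ + (n-1))·B`. -/
theorem backProd_entrywise_pos (n B : ℕ) (hn : 1 ≤ n) (hB : 0 < B)
    (E : ℕ → SimpleGraph (Fin n))
    (hconn : ∀ k : ℕ, (windowGraph E B k).Connected)
    (W : ℕ → Matrix (Fin n) (Fin n) ℝ)
    (hWnonneg : ∀ t i j, 0 ≤ W t i j)
    (hWdiag : ∀ t i, 0 < W t i i)
    (hWadj : ∀ t, ∀ i j : Fin n, i ≠ j → (0 < W t i j ↔ (E t).Adj i j))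
    (τ : ℕ) :
    ∀ i j : Fin n, 0 < backProd W τ ((τ ⌈/⌉ B + (n - 1)) * B) i j := by
  intro i j
  set c := τ ⌈/⌉ B with hc
  have hτc : τ ≤ c * B := by
    have := le_smul_ceilDiv (b := τ) hB
    simpa [smul_eq_mul, mul_comm] using this
  -- the set of rows with positive entry in column j at time t
  set S : ℕ → Finset (Fin n) := fun t =>
    Finset.univ.filter (fun i => 0 < backProd W τ t i j) with hS
  have hSmono : ∀ {t t'}, τ ≤ t → t ≤ t' → S t ⊆ S t' := by
    intro t t' ht htt' a ha
    simp only [hS, Finset.mem_filter, Finset.mem_univ, true_and] at ha ⊢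
    exact BPaux.backProd_mono' W hWnonneg hWdiag ht htt' ha
  have hjS : j ∈ S (c * B) := by
    simp only [hS, Finset.mem_filter, Finset.mem_univ, true_and]
    exact BPaux.backProd_diag_pos W hWnonneg hWdiag hτc j
  -- window growth
  have hwin2 : ∀ k, c ≤ k → j ∈ S (k * B) →
      min n ((S (k * B)).card + 1) ≤ (S ((k + 1) * B)).card := by
    intro k hk hjk
    have hτk : τ ≤ k * B := le_trans hτc (Nat.mul_le_mul_right B hk)
    have hτk1 : τ ≤ (k + 1) * B := by
      calc τ ≤ k * B := hτk
      _ ≤ (k + 1) * B := Nat.mul_le_mul_right B (by omega)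
    have hsub : S (k * B) ⊆ S ((k + 1) * B) :=
      hSmono hτk (Nat.mul_le_mul_right B (by omega))
    by_contra hcon
    push_neg at hcon
    have hcard : (S ((k + 1) * B)).card < n := lt_of_lt_of_le hcon (min_le_left _ _)
    have hcard2 : (S ((k + 1) * B)).card < (S (k * B)).card + 1 :=
      lt_of_lt_of_le hcon (min_le_right _ _)
    have heq : S ((k + 1) * B) = S (k * B) :=
      (Finset.eq_of_subset_of_card_le hsub (by omega)).symm
    -- S (k*B) ≠ univ
    have hne : ∃ u, u ∉ S (k * B) := by
      by_contra hall
      push_neg at hall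
      have : S (k * B) = Finset.univ := Finset.eq_univ_iff_forall.mpr hall
      rw [heq, this] at hcard
      simp only [Finset.card_univ, Fintype.card_fin] at hcard
      omega
    obtain ⟨u, hu⟩ := hne
    obtain ⟨p⟩ := ((hconn k).preconnected u j)
    obtain ⟨a, b, haS, hbS, hadj⟩ := BPaux.exists_crossing p hu hjk
    obtain ⟨t, ht1, ht2, hEadj⟩ := BPaux.windowGraph_adj hadj
    have hτt : τ ≤ t := le_trans hτk ht1
    have hba : (0 : ℝ) < W t b a := (hWadj t b a hEadj.symm.ne).mpr hEadj.symm
    have haT : a ∈ S t := hSmono hτk ht1 haS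
    simp only [hS, Finset.mem_filter, Finset.mem_univ, true_and] at haT
    have hbT : 0 < backProd W τ (t + 1) b j :=
      BPaux.backProd_prop W hWnonneg hτt hba haT
    have hbk1 : b ∈ S ((k + 1) * B) := by
      have : b ∈ S (t + 1) := by
        simp only [hS, Finset.mem_filter, Finset.mem_univ, true_and]
        exact hbT
      exact hSmono (by omega) (by omega) this
    rw [heq] at hbk1
    exact hbS hbk1
  -- iterate over windows
  have hiter : ∀ m, min n (1 + m) ≤ (S ((c + m) * B)).card ∧ j ∈ S ((c + m) * B) := by
    intro m
    induction m with
    | zero =>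
      constructor
      · have h0 : 0 < (S (c * B)).card := Finset.card_pos.mpr ⟨j, hjS⟩
        have he : (c + 0) * B = c * B := by ring_nf
        rw [he]
        omega
      · simpa using hjS
    | succ m ih =>
      obtain ⟨ihcard, ihj⟩ := ih
      have hk : c ≤ c + m := by omega
      have hstep := hwin2 (c + m) hk ihj
      have hcardle : (S ((c + m) * B)).card ≤ n := Finset.card_le_card (Finset.subset_univ _) |>.trans_eq (Finset.card_univ.trans (Fintype.card_fin n))
      constructor
      · have h1 : (c + m + 1) = (c + (m + 1)) := by omega
        rw [← h1]
        omega
      · have h1 : (c + m + 1) * B = (c + (m + 1)) * B := by ring_nf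
        have hτk : τ ≤ (c + m) * B := le_trans hτc (Nat.mul_le_mul_right B (by omega))
        have := hSmono hτk (Nat.mul_le_mul_right B (show c + m ≤ c + (m+1) by omega)) ihj
        exact this
  -- conclude
  have hfinal := hiter (n - 1)
  have hcard : n ≤ (S ((c + (n - 1)) * B)).card := by
    have := hfinal.1
    have h1 : min n (1 + (n - 1)) = n := by omega
    omega
  have huniv : S ((c + (n - 1)) * B) = Finset.univ := by
    apply Finset.eq_univ_of_card
    have : (S ((c + (n - 1)) * B)).card ≤ n :=
      (Finset.card_le_card (Finset.subset_univ _)).trans_eq (Finset.card_univ.trans (Fintype.card_fin n))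
    simp only [Fintype.card_fin]
    omega
  have : i ∈ S ((c + (n - 1)) * B) := huniv ▸ Finset.mem_univ i
  simpa only [hS, Finset.mem_filter, Finset.mem_univ, true_and] using this
end

section
/- Let V = {1,…,n} and let (E_t)_{t∈ℕ} be a uniformly B-connected sequence of undirected edge sets on V, and let W_t be the Metropolis weight matrix of the graph (V, E_t) for each t. Then for every starting time τ, the backward matrix products converge to the uniform averaging matrix: W_T W_{T−1} ⋯ W_τ → (1/n) 𝟙 𝟙ᵀ as T → ∞, where 𝟙 ∈ ℝⁿ is the all-ones vector; i.e., the product has the uniform stationary distribution regardless of τ. -/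
open Matrix

/-- The Metropolis weight matrix of an undirected graph `G` on `{1,…,n}`:
`W i j = 1/(1 + max(deg i, deg j))` for edges `(i,j) ∈ E`, `W i j = 0` for
non-adjacent `i ≠ j`, and `W i i = 1 - ∑_{j : (i,j) ∈ E} W i j`. -/
noncomputable def metropolis {n : ℕ} (G : SimpleGraph (Fin n))
    [DecidableRel G.Adj] : Matrix (Fin n) (Fin n) ℝ :=
  Matrix.of fun i j =>
    if i = j then
      1 - ∑ k ∈ G.neighborFinset i,
        (1 : ℝ) / (1 + max (G.degree i) (G.degree k) : ℝ)
    else if G.Adj i j then (1 : ℝ) / (1 + max (G.degree i) (G.degree j) : ℝ)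
    else 0

/-! ### Basic properties of the Metropolis matrix -/

section Metro
variable {n : ℕ} (G : SimpleGraph (Fin n)) [DecidableRel G.Adj]

lemma metro_term_pos (i j : Fin n) :
    0 < (1 : ℝ) / (1 + max (G.degree i) (G.degree j) : ℝ) := by
  apply div_pos one_pos
  positivity

lemma metro_term_le (i j : Fin n) :
    (1 : ℝ) / (1 + max (G.degree i) (G.degree j) : ℝ) ≤ 1 / (1 + G.degree i : ℝ) := by
  apply one_div_le_one_div_of_le (by positivity)
  have : (G.degree i : ℝ) ≤ (max (G.degree i) (G.degree j) : ℕ) := by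
    exact_mod_cast le_max_left _ _
  linarith

lemma metro_term_ge (hn : 0 < n) (i j : Fin n) :
    (1 : ℝ) / n ≤ (1 : ℝ) / (1 + max (G.degree i) (G.degree j) : ℝ) := by
  apply one_div_le_one_div_of_le (by positivity)
  have h1 : G.degree i < n := by simpa using G.degree_lt_card_verts i
  have h2 : G.degree j < n := by simpa using G.degree_lt_card_verts j
  have : (max (G.degree i) (G.degree j) : ℕ) < n := max_lt h1 h2
  have h3 : ((max (G.degree i) (G.degree j) : ℕ) : ℝ) + 1 ≤ (n : ℝ) := by
    exact_mod_cast Nat.succ_le_of_lt this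
  linarith

lemma metro_diag_ge (i : Fin n) :
    (1 : ℝ) / (1 + G.degree i : ℝ) ≤ metropolis G i i := by
  simp only [metropolis, Matrix.of_apply, if_true, eq_self_iff_true]
  have hsum : ∑ k ∈ G.neighborFinset i,
      (1 : ℝ) / (1 + max (G.degree i) (G.degree k) : ℝ)
      ≤ ∑ k ∈ G.neighborFinset i, (1 : ℝ) / (1 + G.degree i : ℝ) := by
    apply Finset.sum_le_sum
    intro k _
    exact metro_term_le G i k
  have hcard : ∑ k ∈ G.neighborFinset i, (1 : ℝ) / (1 + G.degree i : ℝ)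
      = (G.degree i : ℝ) / (1 + G.degree i : ℝ) := by
    rw [Finset.sum_const, SimpleGraph.card_neighborFinset_eq_degree]
    simp [div_eq_mul_inv, mul_comm]
  have hd : (0:ℝ) < 1 + G.degree i := by positivity
  have : (G.degree i : ℝ) / (1 + G.degree i) + 1 / (1 + G.degree i) = 1 := by
    field_simp
    ring
  linarith

lemma metro_nonneg (i j : Fin n) : 0 ≤ metropolis G i j := by
  rcases eq_or_ne i j with rfl | hij
  · have : (0:ℝ) < 1 / (1 + G.degree i : ℝ) := by positivity
    linarith [metro_diag_ge G i]
  · simp only [metropolis, Matrix.of_apply, if_neg hij]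
    split
    · exact le_of_lt (metro_term_pos G i j)
    · exact le_refl 0

lemma metro_diag_ge_inv_n (hn : 0 < n) (i : Fin n) :
    (1 : ℝ) / n ≤ metropolis G i i := by
  refine le_trans ?_ (metro_diag_ge G i)
  apply one_div_le_one_div_of_le (by positivity)
  have : G.degree i < n := by simpa using G.degree_lt_card_verts i
  have h3 : (G.degree i : ℝ) + 1 ≤ (n : ℝ) := by exact_mod_cast Nat.succ_le_of_lt this
  linarith

lemma metro_adj_ge (hn : 0 < n) (i j : Fin n) (h : G.Adj i j) :
    (1 : ℝ) / n ≤ metropolis G i j := by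
  simp only [metropolis, Matrix.of_apply, if_neg h.ne, if_pos h]
  exact metro_term_ge G hn i j

lemma metro_symm (i j : Fin n) : metropolis G i j = metropolis G j i := by
  rcases eq_or_ne i j with rfl | hij
  · rfl
  · simp only [metropolis, Matrix.of_apply, if_neg hij, if_neg (Ne.symm hij)]
    by_cases h : G.Adj i j
    · rw [if_pos h, if_pos h.symm, max_comm]
    · rw [if_neg h, if_neg (fun h' => h h'.symm)]

lemma metro_rowsum (i : Fin n) : ∑ j, metropolis G i j = 1 := by
  classical
  rw [← Finset.sum_subset (Finset.subset_univ (insert i (G.neighborFinset i)))]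
  · rw [Finset.sum_insert (by simp)]
    have hdiag : metropolis G i i = 1 - ∑ k ∈ G.neighborFinset i,
        (1 : ℝ) / (1 + max (G.degree i) (G.degree k) : ℝ) := by
      simp [metropolis]
    have hoff : ∀ j ∈ G.neighborFinset i, metropolis G i j
        = (1 : ℝ) / (1 + max (G.degree i) (G.degree j) : ℝ) := by
      intro j hj
      rw [SimpleGraph.mem_neighborFinset] at hj
      simp [metropolis, if_neg hj.ne, hj]
    rw [hdiag, Finset.sum_congr rfl hoff]
    ring
  · intro j _ hj
    simp only [Finset.mem_insert, SimpleGraph.mem_neighborFinset] at hj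
    push_neg at hj
    simp [metropolis, if_neg (Ne.symm hj.1), if_neg hj.2]

lemma metro_colsum (j : Fin n) : ∑ i, metropolis G i j = 1 := by
  rw [Finset.sum_congr rfl fun i _ => metro_symm G i j]
  exact metro_rowsum G j

end Metro

/-! ### Backward products -/

section BProd
variable {n : ℕ}

/-- backward product `W (b-1) * ⋯ * W a`. -/
noncomputable def bprod (F : ℕ → Matrix (Fin n) (Fin n) ℝ) (a b : ℕ) :
    Matrix (Fin n) (Fin n) ℝ :=
  ((List.range (b - a)).map fun s => F (b - 1 - s)).prod

lemma bprod_self (F : ℕ → Matrix (Fin n) (Fin n) ℝ) (a : ℕ) : bprod F a a = 1 := by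
  simp [bprod]

lemma bprod_succ (F : ℕ → Matrix (Fin n) (Fin n) ℝ) {a b : ℕ} (h : a ≤ b) :
    bprod F a (b + 1) = F b * bprod F a b := by
  unfold bprod
  rw [show b + 1 - a = (b - a) + 1 from by omega, List.range_succ_eq_map]
  simp only [List.map_cons, List.prod_cons, List.map_map]
  have h1 : ((fun s => F (b + 1 - 1 - s)) ∘ Nat.succ) = fun s => F (b - 1 - s) := by
    funext s; exact congrArg F (by omega)
  have h2 : b + 1 - 1 - 0 = b := by omega
  rw [h1, h2]

lemma bprod_comp (F : ℕ → Matrix (Fin n) (Fin n) ℝ) {a b c : ℕ} (hab : a ≤ b) (hbc : b ≤ c) :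
    bprod F a c = bprod F b c * bprod F a b := by
  induction c, hbc using Nat.le_induction with
  | base => rw [bprod_self, one_mul]
  | succ c hbc ih =>
      rw [bprod_succ F (le_trans hab hbc), bprod_succ F hbc, ih, mul_assoc]

variable {F : ℕ → Matrix (Fin n) (Fin n) ℝ}

lemma mul_entry_ge (A Bm : Matrix (Fin n) (Fin n) ℝ)
    (hA : ∀ i j, 0 ≤ A i j) (hB : ∀ i j, 0 ≤ Bm i j) (i k j : Fin n) :
    A i k * Bm k j ≤ (A * Bm) i j := by
  rw [Matrix.mul_apply]
  exact Finset.single_le_sum (f := fun l => A i l * Bm l j)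
    (fun l _ => mul_nonneg (hA i l) (hB l j)) (Finset.mem_univ k)

lemma bprod_nonneg (hF : ∀ t i j, 0 ≤ F t i j) {a b : ℕ} (h : a ≤ b) :
    ∀ i j, 0 ≤ bprod F a b i j := by
  induction b, h using Nat.le_induction with
  | base =>
      intro i j
      rw [bprod_self]
      rcases eq_or_ne i j with rfl | hij
      · simp
      · simp [Matrix.one_apply_ne hij]
  | succ b hb ih =>
      intro i j
      rw [bprod_succ F hb, Matrix.mul_apply]
      exact Finset.sum_nonneg fun k _ => mul_nonneg (hF b i k) (ih k j)

lemma bprod_rowsum (hF : ∀ t i, ∑ j, F t i j = 1) {a b : ℕ} (h : a ≤ b) :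
    ∀ i, ∑ j, bprod F a b i j = 1 := by
  induction b, h using Nat.le_induction with
  | base => intro i; rw [bprod_self]; simp [Matrix.one_apply]
  | succ b hb ih =>
      intro i
      rw [bprod_succ F hb]
      simp only [Matrix.mul_apply]
      rw [Finset.sum_comm]
      calc ∑ k, ∑ j, F b i k * bprod F a b k j
          = ∑ k, F b i k * ∑ j, bprod F a b k j := by
            congr 1; funext k; rw [Finset.mul_sum]
        _ = ∑ k, F b i k := by
            congr 1; funext k; rw [ih k, mul_one]
        _ = 1 := hF b i

lemma bprod_colsum (hF : ∀ t j, ∑ i, F t i j = 1) {a b : ℕ} (h : a ≤ b) :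
    ∀ j, ∑ i, bprod F a b i j = 1 := by
  induction b, h using Nat.le_induction with
  | base => intro j; rw [bprod_self]; simp [Matrix.one_apply]
  | succ b hb ih =>
      intro j
      rw [bprod_succ F hb]
      simp only [Matrix.mul_apply]
      rw [Finset.sum_comm]
      calc ∑ k, ∑ i, F b i k * bprod F a b k j
          = ∑ k, (∑ i, F b i k) * bprod F a b k j := by
            congr 1; funext k; rw [Finset.sum_mul]
        _ = ∑ k, bprod F a b k j := by
            congr 1; funext k; rw [hF b k, one_mul]
        _ = 1 := ih j

lemma bprod_diag_ge {c : ℝ} (hc : 0 ≤ c) (hF : ∀ t i j, 0 ≤ F t i j)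
    (hd : ∀ t i, c ≤ F t i i) {a b : ℕ} (h : a ≤ b) :
    ∀ i, c ^ (b - a) ≤ bprod F a b i i := by
  induction b, h using Nat.le_induction with
  | base => intro i; rw [bprod_self]; simp
  | succ b hb ih =>
      intro i
      rw [bprod_succ F hb]
      have h1 : c ^ (b + 1 - a) = c * c ^ (b - a) := by
        rw [show b + 1 - a = (b - a) + 1 from by omega, pow_succ]
        ring
      rw [h1]
      calc c * c ^ (b - a) ≤ F b i i * bprod F a b i i :=
            mul_le_mul (hd b i) (ih i) (pow_nonneg hc _) (le_trans hc (hd b i))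
        _ ≤ (F b * bprod F a b) i i :=
            mul_entry_ge _ _ (hF b) (bprod_nonneg hF hb) i i i

lemma bprod_entry_ge {c : ℝ} (hc : 0 ≤ c) (hF : ∀ t i j, 0 ≤ F t i j)
    (hd : ∀ t i, c ≤ F t i i) {a t b : ℕ} {i j : Fin n}
    (hat : a ≤ t) (htb : t < b) (hadj : c ≤ F t i j) :
    c ^ (b - a) ≤ bprod F a b i j := by
  have hsplit : bprod F a b = bprod F (t + 1) b * (F t * bprod F a t) := by
    rw [bprod_comp F (show a ≤ t + 1 from by omega) (show t + 1 ≤ b from htb),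
      bprod_succ F hat]
  rw [hsplit]
  have hR : ∀ i' j', 0 ≤ (F t * bprod F a t) i' j' := by
    intro i' j'
    rw [Matrix.mul_apply]
    exact Finset.sum_nonneg fun k _ => mul_nonneg (hF t i' k) (bprod_nonneg hF hat k j')
  have h2 : c * c ^ (t - a) ≤ (F t * bprod F a t) i j :=
    le_trans (mul_le_mul hadj (bprod_diag_ge hc hF hd hat j) (pow_nonneg hc _)
      (le_trans hc hadj))
      (mul_entry_ge _ _ (hF t) (bprod_nonneg hF hat) i j j)
  have h1 : c ^ (b - (t + 1)) ≤ bprod F (t + 1) b i i :=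
    bprod_diag_ge hc hF hd (show t + 1 ≤ b from htb) i
  have hpow : c ^ (b - a) = c ^ (b - (t + 1)) * (c * c ^ (t - a)) := by
    rw [show c * c ^ (t - a) = c ^ (t - a + 1) from by rw [pow_succ]; ring,
      ← pow_add]
    congr 1
    omega
  rw [hpow]
  calc c ^ (b - (t + 1)) * (c * c ^ (t - a))
      ≤ bprod F (t + 1) b i i * (F t * bprod F a t) i j :=
        mul_le_mul h1 h2 (by positivity) (le_trans (by positivity) h1)
    _ ≤ (bprod F (t + 1) b * (F t * bprod F a t)) i j :=
        mul_entry_ge _ _ (bprod_nonneg hF (show t + 1 ≤ b from htb)) hR i i j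

end BProd

/-! ### Oscillation -/

section Osc
variable {n : ℕ} [NeZero n]

noncomputable def osc (x : Fin n → ℝ) : ℝ :=
  Finset.univ.sup' Finset.univ_nonempty x - Finset.univ.inf' Finset.univ_nonempty x

lemma osc_nonneg (x : Fin n → ℝ) : 0 ≤ osc x := by
  have i : Fin n := ⟨0, Nat.pos_of_ne_zero (NeZero.ne n)⟩
  have h1 := Finset.inf'_le (b := i) x (Finset.mem_univ i)
  have h2 := Finset.le_sup' (b := i) x (Finset.mem_univ i)
  unfold osc; linarith

lemma mulVec_le_sup (A : Matrix (Fin n) (Fin n) ℝ) (hA : ∀ i j, 0 ≤ A i j)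
    (hrow : ∀ i, ∑ j, A i j = 1) (x : Fin n → ℝ) (i : Fin n) :
    (A *ᵥ x) i ≤ Finset.univ.sup' Finset.univ_nonempty x := by
  have : (A *ᵥ x) i = ∑ j, A i j * x j := rfl
  rw [this]
  calc ∑ j, A i j * x j ≤ ∑ j, A i j * Finset.univ.sup' Finset.univ_nonempty x := by
        apply Finset.sum_le_sum
        intro j _
        exact mul_le_mul_of_nonneg_left (Finset.le_sup' x (Finset.mem_univ j)) (hA i j)
    _ = Finset.univ.sup' Finset.univ_nonempty x := by
        rw [← Finset.sum_mul, hrow, one_mul]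

lemma inf_le_mulVec (A : Matrix (Fin n) (Fin n) ℝ) (hA : ∀ i j, 0 ≤ A i j)
    (hrow : ∀ i, ∑ j, A i j = 1) (x : Fin n → ℝ) (i : Fin n) :
    Finset.univ.inf' Finset.univ_nonempty x ≤ (A *ᵥ x) i := by
  have : (A *ᵥ x) i = ∑ j, A i j * x j := rfl
  rw [this]
  calc Finset.univ.inf' Finset.univ_nonempty x
      = ∑ j, A i j * Finset.univ.inf' Finset.univ_nonempty x := by
        rw [← Finset.sum_mul, hrow, one_mul]
    _ ≤ ∑ j, A i j * x j := by
        apply Finset.sum_le_sum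
        intro j _
        exact mul_le_mul_of_nonneg_left (Finset.inf'_le x (Finset.mem_univ j)) (hA i j)

lemma osc_mulVec_le (A : Matrix (Fin n) (Fin n) ℝ) (hA : ∀ i j, 0 ≤ A i j)
    (hrow : ∀ i, ∑ j, A i j = 1) (x : Fin n → ℝ) :
    osc (A *ᵥ x) ≤ osc x := by
  unfold osc
  have h1 : Finset.univ.sup' Finset.univ_nonempty (A *ᵥ x)
      ≤ Finset.univ.sup' Finset.univ_nonempty x :=
    Finset.sup'_le _ _ fun i _ => mulVec_le_sup A hA hrow x i
  have h2 : Finset.univ.inf' Finset.univ_nonempty x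
      ≤ Finset.univ.inf' Finset.univ_nonempty (A *ᵥ x) :=
    Finset.le_inf' _ _ fun i _ => inf_le_mulVec A hA hrow x i
  linarith

lemma osc_mulVec_contract (A : Matrix (Fin n) (Fin n) ℝ) (δ : ℝ)
    (hA : ∀ i j, δ ≤ A i j) (hrow : ∀ i, ∑ j, A i j = 1) (x : Fin n → ℝ) :
    osc (A *ᵥ x) ≤ (1 - n * δ) * osc x := by
  set M := Finset.univ.sup' (α := ℝ) (Finset.univ_nonempty (α := Fin n)) x with hM
  set m := Finset.univ.inf' (α := ℝ) (Finset.univ_nonempty (α := Fin n)) x with hm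
  have hub : ∀ i, (A *ᵥ x) i ≤ (1 - n * δ) * M + δ * ∑ k, x k := by
    intro i
    have : (A *ᵥ x) i = ∑ k, (A i k - δ) * x k + δ * ∑ k, x k := by
      simp only [Matrix.mulVec, dotProduct]
      rw [Finset.mul_sum, ← Finset.sum_add_distrib]
      congr 1; funext k; ring
    rw [this]
    have : ∑ k, (A i k - δ) * x k ≤ ∑ k, (A i k - δ) * M := by
      apply Finset.sum_le_sum
      intro k _
      exact mul_le_mul_of_nonneg_left (Finset.le_sup' x (Finset.mem_univ k))
        (by linarith [hA i k])
    have hsum : ∑ k, (A i k - δ) * M = (1 - n * δ) * M := by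
      rw [← Finset.sum_mul]
      congr 1
      rw [Finset.sum_sub_distrib, hrow, Finset.sum_const, Finset.card_univ]
      simp [nsmul_eq_mul]
    linarith
  have hlb : ∀ i, (1 - n * δ) * m + δ * ∑ k, x k ≤ (A *ᵥ x) i := by
    intro i
    have heq : (A *ᵥ x) i = ∑ k, (A i k - δ) * x k + δ * ∑ k, x k := by
      simp only [Matrix.mulVec, dotProduct]
      rw [Finset.mul_sum, ← Finset.sum_add_distrib]
      congr 1; funext k; ring
    rw [heq]
    have : ∑ k, (A i k - δ) * m ≤ ∑ k, (A i k - δ) * x k := by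
      apply Finset.sum_le_sum
      intro k _
      exact mul_le_mul_of_nonneg_left (Finset.inf'_le x (Finset.mem_univ k))
        (by linarith [hA i k])
    have hsum : ∑ k, (A i k - δ) * m = (1 - n * δ) * m := by
      rw [← Finset.sum_mul]
      congr 1
      rw [Finset.sum_sub_distrib, hrow, Finset.sum_const, Finset.card_univ]
      simp [nsmul_eq_mul]
    linarith
  unfold osc
  have h1 : Finset.univ.sup' Finset.univ_nonempty (A *ᵥ x)
      ≤ (1 - n * δ) * M + δ * ∑ k, x k := Finset.sup'_le _ _ fun i _ => hub i
  have h2 : (1 - n * δ) * m + δ * ∑ k, x k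
      ≤ Finset.univ.inf' Finset.univ_nonempty (A *ᵥ x) := Finset.le_inf' _ _ fun i _ => hlb i
  have hx : osc x = M - m := rfl
  calc Finset.univ.sup' Finset.univ_nonempty (A *ᵥ x)
        - Finset.univ.inf' Finset.univ_nonempty (A *ᵥ x)
      ≤ ((1 - n * δ) * M + δ * ∑ k, x k) - ((1 - n * δ) * m + δ * ∑ k, x k) := by linarith
    _ = (1 - n * δ) * (M - m) := by ring
    _ = (1 - n * δ) * osc x := by rw [hx]

end Osc

/-- crossing edge out of a proper subset of a connected graph -/
lemma crossing {n : ℕ} (G : SimpleGraph (Fin n)) (hG : G.Connected)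
    (S : Finset (Fin n)) (hS : S.Nonempty) (hS' : S ≠ Finset.univ) :
    ∃ u ∉ S, ∃ v ∈ S, G.Adj u v := by
  obtain ⟨v0, hv0⟩ := hS
  have : ∃ u, u ∉ S := by
    by_contra h
    push_neg at h
    exact hS' (Finset.eq_univ_iff_forall.mpr h)
  obtain ⟨u0, hu0⟩ := this
  obtain ⟨w⟩ := hG.preconnected u0 v0
  clear hS'
  induction w with
  | nil => exact absurd hv0 hu0
  | @cons a b c hab p ih =>
      by_cases hb : b ∈ S
      · exact ⟨a, hu0, b, hb, hab⟩
      · exact ih hv0 hb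

/-! ### Window and block estimates -/

section Main
variable {n B : ℕ} (E : ℕ → SimpleGraph (Fin n)) [∀ t, DecidableRel (E t).Adj]

lemma window_adj_exists {k : ℕ} {i j : Fin n} (h : (windowGraph E B k).Adj i j) :
    ∃ t, k * B ≤ t ∧ t < (k + 1) * B ∧ (E t).Adj i j := by
  simp only [windowGraph, SimpleGraph.iSup_adj] at h
  obtain ⟨t, ht, hadj⟩ := h
  rw [Finset.mem_Ico] at ht
  exact ⟨t, ht.1, ht.2, hadj⟩

lemma window_prod_ge (hn : 0 < n) (k : ℕ) {i j : Fin n}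
    (h : i = j ∨ (windowGraph E B k).Adj i j) :
    ((1 : ℝ) / n) ^ B ≤ bprod (fun t => metropolis (E t)) (k * B) ((k + 1) * B) i j := by
  have hc : (0:ℝ) ≤ 1 / n := by positivity
  have hF : ∀ t i' j', 0 ≤ metropolis (E t) i' j' := fun t => metro_nonneg (E t)
  have hd : ∀ t i', (1:ℝ)/n ≤ metropolis (E t) i' i' :=
    fun t i' => metro_diag_ge_inv_n (E t) hn i'
  have hle : k * B ≤ (k + 1) * B := Nat.mul_le_mul_right B (by omega)
  have hexp : (k + 1) * B - k * B = B := by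
    rw [Nat.add_mul, one_mul]; omega
  rcases h with rfl | hadj
  · have := bprod_diag_ge hc hF hd hle i
    rwa [hexp] at this
  · obtain ⟨t, ht1, ht2, hadj'⟩ := window_adj_exists E hadj
    have := bprod_entry_ge hc hF hd ht1 ht2 (metro_adj_ge (E t) hn i j hadj')
    rwa [hexp] at this

lemma block_sets (hn : 0 < n)
    (hconn : ∀ k : ℕ, (windowGraph E B k).Connected) (k : ℕ) (j : Fin n) :
    ∀ m : ℕ, ∃ S : Finset (Fin n), j ∈ S ∧ min n (m + 1) ≤ S.card ∧
      ∀ i ∈ S, (((1 : ℝ) / n) ^ B) ^ m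
        ≤ bprod (fun t => metropolis (E t)) (k * B) ((k + m) * B) i j := by
  have hc : (0:ℝ) ≤ 1 / n := by positivity
  have hF : ∀ t i' j', 0 ≤ metropolis (E t) i' j' := fun t => metro_nonneg (E t)
  intro m
  induction m with
  | zero =>
      refine ⟨{j}, Finset.mem_singleton_self j, by simp, ?_⟩
      intro i hi
      rw [Finset.mem_singleton] at hi
      subst hi
      simp only [pow_zero, Nat.add_zero]
      rw [bprod_self]
      simp
  | succ m ih =>
      obtain ⟨S, hjS, hcard, hS⟩ := ih
      have hsplit : bprod (fun t => metropolis (E t)) (k * B) ((k + (m + 1)) * B)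
          = bprod (fun t => metropolis (E t)) ((k + m) * B) ((k + m + 1) * B)
            * bprod (fun t => metropolis (E t)) (k * B) ((k + m) * B) := by
        rw [show (k + (m + 1)) * B = (k + m + 1) * B from by ring]
        exact bprod_comp _ (Nat.mul_le_mul_right B (by omega))
          (Nat.mul_le_mul_right B (by omega))
      have hWnn : ∀ i' j', 0 ≤ bprod (fun t => metropolis (E t))
          ((k + m) * B) ((k + m + 1) * B) i' j' :=
        bprod_nonneg hF (Nat.mul_le_mul_right B (by omega))
      have hPnn : ∀ i' j', 0 ≤ bprod (fun t => metropolis (E t))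
          (k * B) ((k + m) * B) i' j' :=
        bprod_nonneg hF (Nat.mul_le_mul_right B (by omega))
      have key : ∀ i v, v ∈ S → (i = v ∨ (windowGraph E B (k + m)).Adj i v) →
          (((1 : ℝ) / n) ^ B) ^ (m + 1)
            ≤ bprod (fun t => metropolis (E t)) (k * B) ((k + (m + 1)) * B) i j := by
        intro i v hv hiv
        rw [hsplit]
        have h1 := window_prod_ge E hn (k + m) hiv
        have h2 := hS v hv
        calc (((1 : ℝ) / n) ^ B) ^ (m + 1) = ((1:ℝ)/n)^B * (((1:ℝ)/n)^B)^m := by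
              rw [pow_succ]; ring
          _ ≤ bprod (fun t => metropolis (E t)) ((k + m) * B) ((k + m + 1) * B) i v
              * bprod (fun t => metropolis (E t)) (k * B) ((k + m) * B) v j :=
              mul_le_mul h1 h2 (by positivity) (le_trans (by positivity) h1)
          _ ≤ _ := mul_entry_ge _ _ hWnn hPnn i v j
      by_cases hSu : S = Finset.univ
      · refine ⟨S, hjS, ?_, ?_⟩
        · rw [hSu, Finset.card_univ, Fintype.card_fin]
          exact min_le_left _ _
        · intro i hi
          exact key i i hi (Or.inl rfl)
      · obtain ⟨u, hu, v, hv, huv⟩ := crossing _ (hconn (k + m)) S ⟨j, hjS⟩ hSu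
        refine ⟨insert u S, Finset.mem_insert_of_mem hjS, ?_, ?_⟩
        · rw [Finset.card_insert_of_notMem hu]
          have hle : S.card ≤ n := le_trans (Finset.card_le_univ S) (by simp)
          omega
        · intro i hi
          rcases Finset.mem_insert.mp hi with rfl | hiS
          · exact key i v hv (Or.inr huv)
          · exact key i i hiS (Or.inl rfl)

lemma block_entries (hn : 0 < n)
    (hconn : ∀ k : ℕ, (windowGraph E B k).Connected) (k : ℕ) (i j : Fin n) :
    (((1 : ℝ) / n) ^ B) ^ (n - 1)
      ≤ bprod (fun t => metropolis (E t)) (k * B) ((k + (n - 1)) * B) i j := by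
  obtain ⟨S, hjS, hcard, hS⟩ := block_sets E hn hconn k j (n - 1)
  have hmin : min n (n - 1 + 1) = n := by omega
  rw [hmin] at hcard
  have hSu : S = Finset.univ := by
    apply Finset.eq_univ_of_card
    have h1 : S.card ≤ n := by
      have := Finset.card_le_univ S
      simpa [Finset.card_univ] using this
    rw [Fintype.card_fin]
    omega
  exact hS i (hSu ▸ Finset.mem_univ i)

end Main

/-- For a uniformly `B`-connected time-varying graph on
`V = {1,…,n}` with Metropolis weight matrices `W t`, the backward products
`W T * W (T-1) * ⋯ * W τ` converge, as `T → ∞`, to the uniform averaging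
matrix `(1/n) 𝟙 𝟙ᵀ`, for every starting time `τ`. -/
theorem metropolis_backProd_tendsto_uniform (n B : ℕ) (hn : 0 < n) (hB : 0 < B)
    (E : ℕ → SimpleGraph (Fin n)) [∀ t, DecidableRel (E t).Adj]
    (hconn : ∀ k : ℕ, (windowGraph E B k).Connected) (τ : ℕ) :
    Filter.Tendsto
      (fun T : ℕ =>
        ((List.range (T + 1 - τ)).map fun s => metropolis (E (T - s))).prod)
      Filter.atTop
      (nhds ((n : ℝ)⁻¹ • vecMulVec (fun _ : Fin n => (1 : ℝ))
        (fun _ : Fin n => (1 : ℝ)))) := by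
  have hfun : (fun T : ℕ =>
        ((List.range (T + 1 - τ)).map fun s => metropolis (E (T - s))).prod)
      = fun T : ℕ => bprod (fun t => metropolis (E t)) τ (T + 1) := by
    funext T
    simp [bprod]
  rw [hfun]
  set F := fun t => metropolis (E t) with hFdef
  have hF : ∀ t i j, 0 ≤ F t i j := fun t => metro_nonneg (E t)
  have hFrow : ∀ t i, ∑ j, F t i j = 1 := fun t => metro_rowsum (E t)
  have hFcol : ∀ t j, ∑ i, F t i j = 1 := fun t => metro_colsum (E t)
  haveI : NeZero n := ⟨by omega⟩
  rcases Nat.lt_or_ge n 2 with hn1 | hn2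
  · -- n = 1 : every matrix is the 1×1 identity
    have hn' : n = 1 := by omega
    have hsub : ∀ i j : Fin n, i = j := by
      intro i j
      have hi := i.isLt
      have hj := j.isLt
      exact Fin.ext (by omega)
    have hone : ∀ t, F t = 1 := by
      intro t
      ext i j
      have hij := hsub i j
      subst hij
      have hdeg : (E t).neighborFinset i = ∅ := by
        ext k
        simp only [SimpleGraph.mem_neighborFinset, Finset.notMem_empty, iff_false]
        intro hadj
        exact hadj.ne (hsub i k)
      simp [hFdef, metropolis, hdeg, Matrix.one_apply_eq]
    have hprod : ∀ T : ℕ, bprod F τ (T + 1) = 1 := by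
      intro T
      unfold bprod
      apply List.prod_eq_one
      intro x hx
      simp only [List.mem_map] at hx
      obtain ⟨s, _, rfl⟩ := hx
      exact hone _
    have htar : ((n : ℝ)⁻¹ • vecMulVec (fun _ : Fin n => (1 : ℝ))
        (fun _ : Fin n => (1 : ℝ))) = (1 : Matrix (Fin n) (Fin n) ℝ) := by
      ext i j
      have hij := hsub i j
      subst hij
      rw [Matrix.smul_apply, Matrix.vecMulVec_apply, Matrix.one_apply_eq, hn']
      norm_num
    rw [htar]
    have : (fun T : ℕ => bprod F τ (T + 1)) = fun _ : ℕ => (1 : Matrix (Fin n) (Fin n) ℝ) := by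
      funext T; exact hprod T
    rw [this]
    exact tendsto_const_nhds
  · -- main case: n ≥ 2
    set δ : ℝ := (((1 : ℝ) / n) ^ B) ^ (n - 1) with hδdef
    have hδpos : 0 < δ := by positivity
    have hδle : (n : ℝ) * δ ≤ 1 := by
      have h1 : δ = ((1 : ℝ) / n) ^ (B * (n - 1)) := by rw [hδdef, pow_mul]
      have hm1 : 1 ≤ B * (n - 1) := Nat.mul_pos hB (by omega)
      have h2 : ((1 : ℝ) / n) ^ (B * (n - 1)) ≤ ((1 : ℝ) / n) ^ 1 :=
        pow_le_pow_of_le_one (by positivity)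
          (by rw [div_le_one (by positivity)]; exact_mod_cast hn) hm1
      rw [h1]
      calc (n : ℝ) * ((1 : ℝ) / n) ^ (B * (n - 1))
          ≤ (n : ℝ) * ((1 : ℝ) / n) ^ 1 :=
            mul_le_mul_of_nonneg_left h2 (by positivity)
        _ = 1 := by
            rw [pow_one]
            field_simp
    set γ : ℝ := 1 - n * δ with hγdef
    have hγ0 : 0 ≤ γ := by rw [hγdef]; linarith
    have hγ1 : γ < 1 := by
      have : (0:ℝ) < (n : ℝ) * δ := by positivity
      rw [hγdef]; linarith
    set L : ℕ := (n - 1) * B with hLdef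
    have hL : 0 < L := Nat.mul_pos (by omega) hB
    -- geometric contraction over blocks
    have hcontract : ∀ m : ℕ, ∀ x : Fin n → ℝ,
        osc (bprod F (τ * B) (τ * B + m * L) *ᵥ x) ≤ γ ^ m * osc x := by
      intro m
      induction m with
      | zero =>
          intro x
          simp [bprod_self, Matrix.one_mulVec]
      | succ m ih =>
          intro x
          have hle1 : τ * B ≤ τ * B + m * L := Nat.le_add_right _ _
          have hle2 : τ * B + m * L ≤ τ * B + (m + 1) * L :=
            Nat.add_le_add_left (Nat.mul_le_mul_right L (by omega)) _
          have hsplit := bprod_comp F hle1 hle2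
          have heq1 : (τ + m * (n - 1)) * B = τ * B + m * L := by
            rw [hLdef, Nat.add_mul, Nat.mul_assoc]
          have heq2 : (τ + m * (n - 1) + (n - 1)) * B = τ * B + (m + 1) * L := by
            rw [hLdef, Nat.add_mul, Nat.add_mul, Nat.mul_assoc, Nat.succ_mul, Nat.add_assoc]
          have hblock : ∀ i j, δ ≤ bprod F (τ * B + m * L) (τ * B + (m + 1) * L) i j := by
            intro i j
            have hbe := block_entries E hn hconn (τ + m * (n - 1)) i j
            rw [heq1] at hbe
            rw [show (τ + m * (n - 1) + (n - 1)) * B = τ * B + (m + 1) * L from heq2] at hbe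
            exact le_of_eq_of_le hδdef hbe
          have hrowB : ∀ i, ∑ j, bprod F (τ * B + m * L) (τ * B + (m + 1) * L) i j = 1 :=
            bprod_rowsum hFrow hle2
          rw [hsplit, ← Matrix.mulVec_mulVec]
          calc osc (bprod F (τ * B + m * L) (τ * B + (m + 1) * L) *ᵥ
                  (bprod F (τ * B) (τ * B + m * L) *ᵥ x))
              ≤ (1 - n * δ) * osc (bprod F (τ * B) (τ * B + m * L) *ᵥ x) :=
                osc_mulVec_contract _ δ hblock hrowB _
            _ = γ * osc (bprod F (τ * B) (τ * B + m * L) *ᵥ x) := by rw [hγdef]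
            _ ≤ γ * (γ ^ m * osc x) := mul_le_mul_of_nonneg_left (ih x) hγ0
            _ = γ ^ (m + 1) * osc x := by rw [pow_succ]; ring
    -- the key entrywise estimate
    have key : ∀ (i j : Fin n) (T : ℕ), τ * B ≤ T + 1 →
        |bprod F τ (T + 1) i j - (n : ℝ)⁻¹| ≤ γ ^ ((T + 1 - τ * B) / L) := by
      intro i j T hT
      set m := (T + 1 - τ * B) / L with hmdef
      have hm : τ * B + m * L ≤ T + 1 := by
        have h1 : m * L ≤ T + 1 - τ * B := Nat.div_mul_le_self _ _
        omega
      have hτB : τ ≤ τ * B := Nat.le_mul_of_pos_right τ hB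
      have hτT : τ ≤ T + 1 := le_trans hτB hT
      have hsplit : bprod F τ (T + 1)
          = bprod F (τ * B + m * L) (T + 1)
            * (bprod F (τ * B) (τ * B + m * L) * bprod F τ (τ * B)) := by
        rw [← bprod_comp F hτB (Nat.le_add_right _ _),
          ← bprod_comp F (le_trans hτB (Nat.le_add_right _ _)) hm]
      set x : Fin n → ℝ := Pi.single j 1 with hxdef
      have hoscx : osc x ≤ 1 := by
        unfold osc
        have h1 : Finset.univ.sup' Finset.univ_nonempty x ≤ 1 := by
          apply Finset.sup'_le
          intro b _
          rw [hxdef, Pi.single_apply]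
          split <;> norm_num
        have h2 : (0 : ℝ) ≤ Finset.univ.inf' Finset.univ_nonempty x := by
          apply Finset.le_inf'
          intro b _
          rw [hxdef, Pi.single_apply]
          split <;> norm_num
        linarith
      have hosccol : osc (bprod F τ (T + 1) *ᵥ x) ≤ γ ^ m := by
        rw [hsplit, ← Matrix.mulVec_mulVec, ← Matrix.mulVec_mulVec]
        calc osc (bprod F (τ * B + m * L) (T + 1) *ᵥ
                (bprod F (τ * B) (τ * B + m * L) *ᵥ (bprod F τ (τ * B) *ᵥ x)))
            ≤ osc (bprod F (τ * B) (τ * B + m * L) *ᵥ (bprod F τ (τ * B) *ᵥ x)) :=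
              osc_mulVec_le _ (bprod_nonneg hF hm) (bprod_rowsum hFrow hm) _
          _ ≤ γ ^ m * osc (bprod F τ (τ * B) *ᵥ x) := hcontract m _
          _ ≤ γ ^ m * osc x :=
              mul_le_mul_of_nonneg_left
                (osc_mulVec_le _ (bprod_nonneg hF hτB) (bprod_rowsum hFrow hτB) x)
                (pow_nonneg hγ0 m)
          _ ≤ γ ^ m * 1 := mul_le_mul_of_nonneg_left hoscx (pow_nonneg hγ0 m)
          _ = γ ^ m := mul_one _
      have hcol : bprod F τ (T + 1) *ᵥ x = fun i' => bprod F τ (T + 1) i' j := by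
        rw [hxdef, Matrix.mulVec_single]
        funext i'
        simp
      rw [hcol] at hosccol
      have hsum : ∑ i', bprod F τ (T + 1) i' j = 1 := bprod_colsum hFcol hτT j
      set g : Fin n → ℝ := fun i' => bprod F τ (T + 1) i' j with hgdef
      have hninf : (n : ℝ) * Finset.univ.inf' Finset.univ_nonempty g ≤ 1 := by
        rw [← hsum]
        calc (n : ℝ) * Finset.univ.inf' Finset.univ_nonempty g
            = ∑ _i' : Fin n, Finset.univ.inf' Finset.univ_nonempty g := by
              rw [Finset.sum_const, Finset.card_univ, Fintype.card_fin, nsmul_eq_mul]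
          _ ≤ ∑ i', g i' :=
              Finset.sum_le_sum fun i' _ => Finset.inf'_le g (Finset.mem_univ i')
      have hnsup : 1 ≤ (n : ℝ) * Finset.univ.sup' Finset.univ_nonempty g := by
        rw [← hsum]
        calc ∑ i', g i'
            ≤ ∑ _i' : Fin n, Finset.univ.sup' Finset.univ_nonempty g :=
              Finset.sum_le_sum fun i' _ => Finset.le_sup' g (Finset.mem_univ i')
          _ = (n : ℝ) * Finset.univ.sup' Finset.univ_nonempty g := by
              rw [Finset.sum_const, Finset.card_univ, Fintype.card_fin, nsmul_eq_mul]
      have hnpos : (0 : ℝ) < n := by positivity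
      have hinf : Finset.univ.inf' Finset.univ_nonempty g ≤ (n : ℝ)⁻¹ := by
        rw [inv_eq_one_div, le_div_iff₀ hnpos]
        nlinarith [hninf]
      have hsup : (n : ℝ)⁻¹ ≤ Finset.univ.sup' Finset.univ_nonempty g := by
        rw [inv_eq_one_div, div_le_iff₀ hnpos]
        nlinarith [hnsup]
      have hup := Finset.le_sup' g (Finset.mem_univ i)
      have hlo := Finset.inf'_le g (Finset.mem_univ i)
      have hosc' : Finset.univ.sup' Finset.univ_nonempty g
          - Finset.univ.inf' Finset.univ_nonempty g ≤ γ ^ m := hosccol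
      rw [abs_le]
      constructor <;> [skip; skip]
      · have : g i = bprod F τ (T + 1) i j := rfl
        rw [← this]
        linarith
      · have : g i = bprod F τ (T + 1) i j := rfl
        rw [← this]
        linarith
    -- pass to the limit entrywise
    refine tendsto_pi_nhds.mpr ?_
    intro i
    rw [tendsto_pi_nhds]
    intro j
    have htar : ((n : ℝ)⁻¹ • vecMulVec (fun _ : Fin n => (1 : ℝ))
        (fun _ : Fin n => (1 : ℝ))) i j = (n : ℝ)⁻¹ := by
      rw [Matrix.smul_apply, Matrix.vecMulVec_apply]
      norm_num
    rw [htar]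
    have hmT : Filter.Tendsto (fun T : ℕ => (T + 1 - τ * B) / L)
        Filter.atTop Filter.atTop := by
      apply Filter.tendsto_atTop_atTop.mpr
      intro N
      refine ⟨τ * B + N * L, fun T hT => ?_⟩
      rw [Nat.le_div_iff_mul_le hL]
      omega
    have hγpow : Filter.Tendsto (fun T : ℕ => γ ^ ((T + 1 - τ * B) / L))
        Filter.atTop (nhds 0) :=
      (tendsto_pow_atTop_nhds_zero_of_lt_one hγ0 hγ1).comp hmT
    have hdiff : Filter.Tendsto (fun T => bprod F τ (T + 1) i j - (n : ℝ)⁻¹)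
        Filter.atTop (nhds 0) := by
      apply squeeze_zero_norm' _ hγpow
      filter_upwards [Filter.eventually_ge_atTop (τ * B)] with T hT
      have := key i j T (by omega)
      simpa [Real.norm_eq_abs] using this
    have hfin := hdiff.add_const ((n : ℝ)⁻¹)
    simp only [sub_add_cancel, zero_add] at hfin
    exact hfin
end
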